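/- Let d ≥ 2 be an integer, β ∈ (1,2) with β < d, and δ ∈ (0,1). For x ∈ ℝ^d, x ≠ 0, set q(t,x) = min( t/|x|^{d+β}, t^{−d/β} ) for t > 0. Then: (i) if |x| ≤ δ^{1/β} or |x| ≥ δ^{−1/β}, one has ∫_0^δ q(t,x) dt + ∫_{1/δ}^∞ q(t,x) dt ≤ (1/2 + β/(d−β)) |x|^{β−d}; (ii) if δ^{1/β} ≤ |x| ≤ δ^{−1/β}, one has ∫_0^δ q(t,x) dt + ∫_{1/δ}^∞ q(t,x) dt ≤ (1/2) δ² |x|^{−(β+d)} + (β/(d−β)) δ^{(d−β)/β}. -/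

import Mathlib

open MeasureTheory Real

noncomputable section

/-- Comparison profile `q(t,x) = min( t/|x|^{d+β}, t^{-d/β} )` for the fractional heat
kernel, as a function of `t` and of `r = |x|`. -/
def qprof (d : ℕ) (β r t : ℝ) : ℝ :=
  min (t / r ^ ((d : ℝ) + β)) (t ^ (-(d : ℝ) / β))

/-- bounds for `∫_0^δ q(t,x) dt + ∫_{1/δ}^∞ q(t,x) dt` in the two regimes
`|x| ≤ δ^{1/β}` or `|x| ≥ δ^{-1/β}`, and `δ^{1/β} ≤ |x| ≤ δ^{-1/β}`. -/
theorem qprof_tail_integral_bounds (d : ℕ) (hd : 2 ≤ d) (β δ : ℝ)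
    (hβ1 : 1 < β) (hβ2 : β < 2) (hβd : β < d) (hδ : δ ∈ Set.Ioo (0:ℝ) 1)
    (x : EuclideanSpace ℝ (Fin d)) (hx : x ≠ 0) :
    ((‖x‖ ≤ δ ^ ((1:ℝ)/β) ∨ δ ^ (-(1/β)) ≤ ‖x‖) →
      (∫ t in Set.Ioc (0:ℝ) δ, qprof d β ‖x‖ t) + (∫ t in Set.Ioi (1/δ), qprof d β ‖x‖ t)
        ≤ (1/2 + β / ((d : ℝ) - β)) * ‖x‖ ^ (β - (d : ℝ))) ∧
    ((δ ^ ((1:ℝ)/β) ≤ ‖x‖ ∧ ‖x‖ ≤ δ ^ (-(1/β))) →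
      (∫ t in Set.Ioc (0:ℝ) δ, qprof d β ‖x‖ t) + (∫ t in Set.Ioi (1/δ), qprof d β ‖x‖ t)
        ≤ (1/2) * δ ^ 2 * ‖x‖ ^ (-(β + (d : ℝ)))
          + (β / ((d : ℝ) - β)) * δ ^ (((d : ℝ) - β) / β)) := by
  obtain ⟨hδ0, hδ1⟩ := hδ
  set r : ℝ := ‖x‖ with hrdef
  have hr : 0 < r := by simpa [hrdef] using norm_pos_iff.mpr hx
  have hβ0 : (0:ℝ) < β := lt_trans one_pos hβ1
  have hdβpos : (0:ℝ) < (d:ℝ) - β := by linarith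
  have hdβ : -(d:ℝ)/β < -1 := by
    rw [div_lt_iff₀ hβ0]; linarith
  have hrp : (0:ℝ) < r ^ ((d:ℝ) + β) := rpow_pos_of_pos hr _
  -- measurability and nonnegativity
  have hmeas : Measurable (qprof d β r) := by unfold qprof; measurability
  have hq_nonneg : ∀ t ∈ Set.Ioi (0:ℝ), 0 ≤ qprof d β r t := fun t ht =>
    le_min (div_nonneg (le_of_lt ht) hrp.le) (rpow_nonneg (le_of_lt ht) _)
  -- linear majorant integral
  have int_lin : ∀ a : ℝ, 0 ≤ a →
      ∫ t in Set.Ioc (0:ℝ) a, t / r ^ ((d:ℝ) + β) = a ^ 2 / (2 * r ^ ((d:ℝ) + β)) := by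
    intro a ha
    rw [integral_div, ← intervalIntegral.integral_of_le ha, integral_id]
    ring
  have intOn_lin : ∀ a : ℝ, IntegrableOn (fun t => t / r ^ ((d:ℝ) + β)) (Set.Ioc 0 a) :=
    fun a => (continuous_id.div_const _).integrableOn_Ioc
  -- power tail integral
  have int_tail : ∀ a : ℝ, 0 < a →
      ∫ t in Set.Ioi a, t ^ (-(d:ℝ)/β) = β / ((d:ℝ) - β) * a ^ ((β - (d:ℝ))/β) := by
    intro a ha
    rw [integral_Ioi_rpow_of_lt hdβ ha]
    have h1 : -(d:ℝ)/β + 1 = (β - (d:ℝ))/β := by field_simp; ring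
    rw [h1]
    have h2 : β - (d:ℝ) ≠ 0 := by linarith
    field_simp
    ring
  have intOn_tail : ∀ a : ℝ, 0 < a → IntegrableOn (fun t : ℝ => t ^ (-(d:ℝ)/β)) (Set.Ioi a) :=
    fun a ha => integrableOn_Ioi_rpow_of_lt hdβ ha
  -- integrability of qprof
  have hq_int_Ioc : ∀ a : ℝ, IntegrableOn (qprof d β r) (Set.Ioc 0 a) := by
    intro a
    refine (intOn_lin a).mono' hmeas.aestronglyMeasurable ?_
    filter_upwards [ae_restrict_mem measurableSet_Ioc] with t ht
    rw [Real.norm_eq_abs, abs_of_nonneg (hq_nonneg t ht.1)]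
    exact min_le_left _ _
  have hq_int_Ioi : ∀ a : ℝ, 0 < a → IntegrableOn (qprof d β r) (Set.Ioi a) := by
    intro a ha
    refine (intOn_tail a ha).mono' hmeas.aestronglyMeasurable ?_
    filter_upwards [ae_restrict_mem measurableSet_Ioi] with t ht
    rw [Real.norm_eq_abs, abs_of_nonneg (hq_nonneg t (lt_trans ha ht))]
    exact min_le_right _ _
  have hcpos : (0:ℝ) < r ^ β := rpow_pos_of_pos hr β
  have hq_int_Ioi0 : IntegrableOn (qprof d β r) (Set.Ioi 0) := by
    rw [← Set.Ioc_union_Ioi_eq_Ioi hcpos.le]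
    exact (hq_int_Ioc _).union (hq_int_Ioi _ hcpos)
  -- bounds on pieces
  have bound_Ioc : ∀ a : ℝ, 0 ≤ a →
      ∫ t in Set.Ioc (0:ℝ) a, qprof d β r t ≤ a ^ 2 / (2 * r ^ ((d:ℝ) + β)) := by
    intro a ha
    rw [← int_lin a ha]
    exact setIntegral_mono_on (hq_int_Ioc a) (intOn_lin a) measurableSet_Ioc
      (fun t _ => min_le_left _ _)
  have bound_Ioi : ∀ a : ℝ, 0 < a →
      ∫ t in Set.Ioi a, qprof d β r t ≤ β / ((d:ℝ) - β) * a ^ ((β - (d:ℝ))/β) := by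
    intro a ha
    rw [← int_tail a ha]
    exact setIntegral_mono_on (hq_int_Ioi a ha) (intOn_tail a ha) measurableSet_Ioi
      (fun t _ => min_le_right _ _)
  have hδinv : (0:ℝ) < 1/δ := by positivity
  -- the sum is at most the integral over all of (0,∞)
  have key : (∫ t in Set.Ioc (0:ℝ) δ, qprof d β r t) + (∫ t in Set.Ioi (1/δ), qprof d β r t)
      ≤ ∫ t in Set.Ioi (0:ℝ), qprof d β r t := by
    have hdisj : Disjoint (Set.Ioc (0:ℝ) δ) (Set.Ioi (1/δ)) := by
      rw [Set.disjoint_left]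
      intro t ht hti
      have h1 : δ < 1/δ := lt_trans hδ1 (one_lt_one_div hδ0 hδ1)
      exact absurd (lt_of_le_of_lt ht.2 h1) (not_lt.mpr hti.le)
    rw [← setIntegral_union hdisj measurableSet_Ioi (hq_int_Ioc δ) (hq_int_Ioi _ hδinv)]
    refine setIntegral_mono_set hq_int_Ioi0 ?_ ?_
    · filter_upwards [ae_restrict_mem measurableSet_Ioi] with t ht using hq_nonneg t ht
    · exact HasSubset.Subset.eventuallyLE
        (Set.union_subset (fun t ht => ht.1) (Set.Ioi_subset_Ioi hδinv.le))
  -- compute the full integral bound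
  have full : (∫ t in Set.Ioi (0:ℝ), qprof d β r t)
      ≤ (1/2 + β / ((d:ℝ) - β)) * r ^ (β - (d:ℝ)) := by
    rw [← Set.Ioc_union_Ioi_eq_Ioi hcpos.le,
      setIntegral_union (Set.Ioc_disjoint_Ioi le_rfl) measurableSet_Ioi
        (hq_int_Ioc _) (hq_int_Ioi _ hcpos)]
    have e1 : ((r ^ β) ^ 2 : ℝ) / (2 * r ^ ((d:ℝ) + β)) = (1/2) * r ^ (β - (d:ℝ)) := by
      rw [← Real.rpow_natCast (r ^ β) 2, ← Real.rpow_mul hr.le]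
      rw [show (β * ((2:ℕ):ℝ)) = β * 2 by norm_num]
      rw [show ((1:ℝ)/2) * r ^ (β - (d:ℝ)) = r ^ (β * 2) / r ^ ((d:ℝ) + β) / 2 by
        rw [← Real.rpow_sub hr]; rw [show β * 2 - ((d:ℝ) + β) = β - (d:ℝ) by ring]; ring]
      ring
    have e2 : (r ^ β : ℝ) ^ ((β - (d:ℝ))/β) = r ^ (β - (d:ℝ)) := by
      rw [← Real.rpow_mul hr.le]
      congr 1
      field_simp
    calc (∫ t in Set.Ioc (0:ℝ) (r ^ β), qprof d β r t)
          + (∫ t in Set.Ioi (r ^ β), qprof d β r t)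
        ≤ (r ^ β) ^ 2 / (2 * r ^ ((d:ℝ) + β)) + β / ((d:ℝ) - β) * (r ^ β) ^ ((β - (d:ℝ))/β) :=
          add_le_add (bound_Ioc _ hcpos.le) (bound_Ioi _ hcpos)
      _ = (1/2 + β / ((d:ℝ) - β)) * r ^ (β - (d:ℝ)) := by rw [e1, e2]; ring
  constructor
  · intro _
    exact le_trans key full
  · intro _
    have b1 := bound_Ioc δ hδ0.le
    have b2 := bound_Ioi (1/δ) hδinv
    have e1 : δ ^ 2 / (2 * r ^ ((d:ℝ) + β)) = (1/2) * δ ^ 2 * r ^ (-(β + (d:ℝ))) := by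
      rw [Real.rpow_neg hr.le, show β + (d:ℝ) = (d:ℝ) + β by ring]
      field_simp
    have e2 : ((1:ℝ)/δ) ^ ((β - (d:ℝ))/β) = δ ^ (((d:ℝ) - β)/β) := by
      rw [one_div, ← Real.rpow_neg_one δ, ← Real.rpow_mul hδ0.le]
      congr 1
      field_simp
      ring
    calc (∫ t in Set.Ioc (0:ℝ) δ, qprof d β r t) + (∫ t in Set.Ioi (1/δ), qprof d β r t)
        ≤ δ ^ 2 / (2 * r ^ ((d:ℝ) + β)) + β / ((d:ℝ) - β) * ((1:ℝ)/δ) ^ ((β - (d:ℝ))/β) :=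
          add_le_add b1 b2
      _ = (1/2) * δ ^ 2 * r ^ (-(β + (d:ℝ))) + (β / ((d:ℝ) - β)) * δ ^ (((d:ℝ) - β)/β) := by
          rw [e1, e2]
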